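/- Let G = (V, E) be a finite simple graph with girth at least five. Call a partition π of V a star partition if every block S of π with |S| ≥ 2 contains a vertex c adjacent in G to every other vertex of S. Associate with each partition π its objective vector x(π) ∈ ℚ^{|V|}, the list of utilities u_i(π) of all players sorted in ascending order, and compare objective vectors lexicographically. Then any star partition whose objective vector is lexicographically maximal among all star partitions of G is in the core. -/

import Mathlib

open Finset
open scoped Classical
set_option linter.unusedSectionVars false
set_option linter.unusedVariables false
set_option maxHeartbeats 1000000

variable {V : Type*} [Fintype V] [DecidableEq V]

/-- The utility of player `i` in coalition `S` in the simple symmetric fractional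
hedonic game given by the graph `G`: the number of neighbors of `i` in `S`
divided by the size of `S`. -/
noncomputable def util (G : SimpleGraph V) (i : V) (S : Finset V) : ℚ :=
  ((S.filter fun j => G.Adj i j).card : ℚ) / (S.card : ℚ)

/-- A partition of the player set `V`, given by the block `part i` of each player `i`. -/
structure FHGPartition (V : Type*) [Fintype V] [DecidableEq V] where
  part : V → Finset V
  mem_part : ∀ i, i ∈ part i
  part_eq : ∀ i j, j ∈ part i → part j = part i

/-- A nonempty coalition `S` blocks `π` if every member is strictly better off in `S`. -/
def Blocks (G : SimpleGraph V) (π : FHGPartition V) (S : Finset V) : Prop :=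
  S.Nonempty ∧ ∀ i ∈ S, util G i (π.part i) < util G i S

/-- A partition is in the core if no nonempty coalition blocks it. -/
def InCore (G : SimpleGraph V) (π : FHGPartition V) : Prop :=
  ∀ S : Finset V, ¬ Blocks G π S

/-- A nonempty coalition `S` weakly blocks `π` if every member is weakly better off
in `S` and some member is strictly better off. -/
def WeaklyBlocks (G : SimpleGraph V) (π : FHGPartition V) (S : Finset V) : Prop :=
  S.Nonempty ∧ (∀ i ∈ S, util G i (π.part i) ≤ util G i S) ∧
    ∃ j ∈ S, util G j (π.part j) < util G j S

/-- A partition is in the strict core if no nonempty coalition weakly blocks it. -/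
def InStrictCore (G : SimpleGraph V) (π : FHGPartition V) : Prop :=
  ∀ S : Finset V, ¬ WeaklyBlocks G π S

/-- A star partition: every block with at least two members contains a center
adjacent to all other members of the block. -/
def IsStarPartition (G : SimpleGraph V) (π : FHGPartition V) : Prop :=
  ∀ i : V, 2 ≤ (π.part i).card →
    ∃ c ∈ π.part i, ∀ j ∈ π.part i, j ≠ c → G.Adj c j

/-- The objective vector of a partition: the list of the utilities of all players,
sorted in ascending order. -/
noncomputable def objVec (G : SimpleGraph V) (π : FHGPartition V) : List ℚ :=
  Multiset.sort (Finset.univ.val.map fun i => util G i (π.part i)) (· ≤ ·)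

section Girth

variable (G : SimpleGraph V)

lemma no_tri (hgirth : ∀ (v : V) (c : G.Walk v v), c.IsCycle → c.length ≠ 3 ∧ c.length ≠ 4) :
    ∀ a b c : V, G.Adj a b → G.Adj b c → G.Adj c a → False := by
  intro a b c hab hbc hca
  have hnab : a ≠ b := G.ne_of_adj hab
  have hnbc : b ≠ c := G.ne_of_adj hbc
  have hnca : c ≠ a := G.ne_of_adj hca
  set w : G.Walk a a := SimpleGraph.Walk.cons hab (SimpleGraph.Walk.cons hbc
    (SimpleGraph.Walk.cons hca SimpleGraph.Walk.nil)) with hw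
  have hcyc : w.IsCycle := by
    rw [SimpleGraph.Walk.isCycle_def]
    refine ⟨?_, ?_, ?_⟩
    · rw [SimpleGraph.Walk.isTrail_def]
      simp [hw, Sym2.eq_iff]
      tauto
    · simp [hw]
    · simp [hw]
      tauto
  exact (hgirth a w hcyc).1 (by simp [hw])

lemma no_c4 (hgirth : ∀ (v : V) (c : G.Walk v v), c.IsCycle → c.length ≠ 3 ∧ c.length ≠ 4)
    (tri : ∀ a b c : V, G.Adj a b → G.Adj b c → G.Adj c a → False) :
    ∀ a b c d : V, G.Adj a b → G.Adj b c → G.Adj c d → G.Adj d a → a ≠ c → b ≠ d → False := by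
  intro a b c d hab hbc hcd hda hac hbd
  have hnab : a ≠ b := G.ne_of_adj hab
  have hnbc : b ≠ c := G.ne_of_adj hbc
  have hncd : c ≠ d := G.ne_of_adj hcd
  have hnda : d ≠ a := G.ne_of_adj hda
  set w : G.Walk a a := SimpleGraph.Walk.cons hab (SimpleGraph.Walk.cons hbc
    (SimpleGraph.Walk.cons hcd (SimpleGraph.Walk.cons hda SimpleGraph.Walk.nil))) with hw
  have hcyc : w.IsCycle := by
    rw [SimpleGraph.Walk.isCycle_def]
    refine ⟨?_, ?_, ?_⟩
    · rw [SimpleGraph.Walk.isTrail_def]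
      simp [hw, Sym2.eq_iff]
      tauto
    · simp [hw]
    · simp [hw]
      tauto
  exact (hgirth a w hcyc).2 (by simp [hw])

end Girth

section Star

variable (G : SimpleGraph V)

def IsStar (B : Finset V) (c : V) : Prop :=
  c ∈ B ∧ ∀ j ∈ B, j ≠ c → G.Adj c j

lemma util_nonneg (i : V) (S : Finset V) : 0 ≤ util G i S := by
  unfold util; positivity

lemma filter_adj_center {B : Finset V} {c : V} (h : IsStar G B c) :
    (B.filter fun j => G.Adj c j) = B.erase c := by
  ext j
  simp only [mem_filter, mem_erase]
  constructor
  · rintro ⟨hj, hadj⟩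
    exact ⟨(G.ne_of_adj hadj).symm, hj⟩
  · rintro ⟨hne, hj⟩
    exact ⟨hj, h.2 j hj hne⟩

lemma util_center {B : Finset V} {c : V} (h : IsStar G B c) :
    util G c B = ((B.card : ℚ) - 1) / (B.card : ℚ) := by
  have h1 : 1 ≤ B.card := Finset.card_pos.mpr ⟨c, h.1⟩
  unfold util
  rw [filter_adj_center G h, Finset.card_erase_of_mem h.1]
  rw [Nat.cast_sub h1, Nat.cast_one]

lemma util_leaf (tri : ∀ a b c : V, G.Adj a b → G.Adj b c → G.Adj c a → False)
    {B : Finset V} {c i : V} (h : IsStar G B c) (hi : i ∈ B) (hic : i ≠ c) :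
    util G i B = 1 / (B.card : ℚ) := by
  have hfilter : (B.filter fun j => G.Adj i j) = {c} := by
    ext j
    simp only [mem_filter, mem_singleton]
    constructor
    · rintro ⟨hj, hadj⟩
      by_contra hjc
      exact tri i j c hadj ((h.2 j hj hjc).symm) (h.2 i hi hic)
    · rintro rfl
      exact ⟨h.1, (h.2 i hi hic).symm⟩
  unfold util
  rw [hfilter, Finset.card_singleton, Nat.cast_one]

lemma util_singleton {i : V} : util G i {i} = 0 := by
  unfold util
  rw [Finset.filter_singleton]
  simp [G.irrefl]

end Star

section PartitionLemmas

variable (π : FHGPartition V)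

lemma mem_part_iff {i j : V} : j ∈ π.part i ↔ π.part j = π.part i :=
  ⟨π.part_eq i j, fun h => h ▸ π.mem_part j⟩

lemma not_mem_part_symm {i j : V} (h : j ∉ π.part i) : i ∉ π.part j := by
  intro hij
  exact h (((mem_part_iff π).mpr ((mem_part_iff π).mp hij).symm))

lemma disjoint_parts {i j : V} (h : j ∉ π.part i) {x : V} (hx : x ∈ π.part i) :
    x ∉ π.part j := by
  intro hxj
  have h1 := π.part_eq i x hx
  have h2 := π.part_eq j x hxj
  rw [h1] at h2
  exact h ((mem_part_iff π).mpr h2.symm)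

lemma part_eq_of_common {i j x : V} (hxi : x ∈ π.part i) (hxj : x ∈ π.part j) :
    π.part i = π.part j := by
  rw [← π.part_eq i x hxi, ← π.part_eq j x hxj]

noncomputable def extract (π : FHGPartition V) (T : Finset V) : FHGPartition V where
  part i := if i ∈ T then T else π.part i \ T
  mem_part i := by
    by_cases h : i ∈ T
    · simp [h]
    · simp [h, π.mem_part i]
  part_eq i j := by
    intro hj
    by_cases h : i ∈ T
    · rw [if_pos h] at hj
      rw [if_pos hj, if_pos h]
    · rw [if_neg h, Finset.mem_sdiff] at hj
      rw [if_neg hj.2, if_neg h, π.part_eq i j hj.1]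

lemma extract_part_mem {T : Finset V} {i : V} (h : i ∈ T) : (extract π T).part i = T := by
  simp [extract, h]

lemma extract_part_not_mem {T : Finset V} {i : V} (h : i ∉ T) :
    (extract π T).part i = π.part i \ T := by
  simp [extract, h]

lemma extract_part_untouched {T : Finset V} {i : V} (h : i ∉ T)
    (h2 : ∀ x ∈ π.part i, x ∉ T) : (extract π T).part i = π.part i := by
  rw [extract_part_not_mem π h]
  exact Finset.sdiff_eq_self_iff_disjoint.mpr (Finset.disjoint_left.mpr h2)

end PartitionLemmas

section Lex

lemma lex_of_counts : ∀ (l₁ l₂ : List ℚ), l₁.Pairwise (· ≤ ·) → l₂.Pairwise (· ≤ ·) →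
    l₁.length = l₂.length → ∀ q : ℚ, (∀ r, r < q → l₁.count r = l₂.count r) →
    l₂.count q < l₁.count q → List.Lex (· < ·) l₁ l₂ := by
  intro l₁
  induction l₁ with
  | nil =>
    intro l₂ _ _ hlen q _ hq
    simp at hq
  | cons a t ih =>
    intro l₂ h₁ h₂ hlen q hcnt hq
    cases l₂ with
    | nil => simp at hlen
    | cons b t₂ =>
      rcases lt_trichotomy a b with hab | hab | hab
      · exact List.Lex.rel hab
      · subst hab
        apply List.Lex.cons
        apply ih t₂ h₁.of_cons h₂.of_cons (by simpa using hlen) q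
        · intro r hr
          have h' := hcnt r hr
          simp only [List.count_cons] at h'
          omega
        · simp only [List.count_cons] at hq
          omega
      · exfalso
        have hsorted := List.pairwise_cons.mp h₁
        have hbt : b ∉ (a :: t) := by
          intro hmem
          rcases List.mem_cons.mp hmem with rfl | hmem'
          · exact lt_irrefl b hab
          · exact absurd (hsorted.1 b hmem') (not_le.mpr hab)
        have h0 : (a :: t).count b = 0 := List.count_eq_zero.mpr hbt
        have h1 : 0 < (b :: t₂).count b := by
          simp [List.count_cons]
        rcases lt_or_ge b q with hbq | hbq
        · rw [hcnt b hbq] at h0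
          omega
        · have hqa : q < a := lt_of_le_of_lt hbq hab
          have hq0 : (a :: t).count q = 0 := by
            apply List.count_eq_zero.mpr
            intro hmem
            rcases List.mem_cons.mp hmem with rfl | hmem'
            · exact lt_irrefl q hqa
            · exact absurd (hsorted.1 q hmem') (not_le.mpr hqa)
          omega

lemma count_objVec (G : SimpleGraph V) (π : FHGPartition V) (r : ℚ) :
    (objVec G π).count r = (Finset.univ.filter fun i => util G i (π.part i) = r).card := by
  unfold objVec
  rw [← Multiset.coe_count, Multiset.sort_eq, Multiset.count_map]
  rw [Finset.card_def, Finset.filter_val]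
  exact congrArg Multiset.card (Multiset.filter_congr (fun x _ => eq_comm))

lemma improve (G : SimpleGraph V) (π π' : FHGPartition V) (q : ℚ)
    (h : ∀ i, util G i (π'.part i) ≠ util G i (π.part i) →
      q ≤ util G i (π.part i) ∧ q < util G i (π'.part i))
    (z : V) (hz : util G z (π.part z) = q) (hz' : util G z (π'.part z) ≠ q) :
    List.Lex (· < ·) (objVec G π) (objVec G π') := by
  refine lex_of_counts (objVec G π) (objVec G π') ?_ ?_ ?_ q ?_ ?_
  · exact Multiset.pairwise_sort _ _
  · exact Multiset.pairwise_sort _ _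
  · unfold objVec
    rw [Multiset.length_sort, Multiset.length_sort, Multiset.card_map, Multiset.card_map]
  · intro r hr
    rw [count_objVec, count_objVec]
    congr 1
    apply Finset.filter_congr
    intro i _
    by_cases hne : util G i (π'.part i) = util G i (π.part i)
    · rw [hne]
    · obtain ⟨h1, h2⟩ := h i hne
      constructor
      · intro he; exact absurd (he ▸ h1) (not_le.mpr hr)
      · intro he; exact absurd (he ▸ h2) (not_lt.mpr (le_of_lt hr))
  · rw [count_objVec, count_objVec]
    apply Finset.card_lt_card
    rw [Finset.ssubset_iff_of_subset]
    · exact ⟨z, by simp [hz], by simp [hz']⟩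
    · intro i hi
      simp only [Finset.mem_filter, Finset.mem_univ, true_and] at hi ⊢
      by_cases hne : util G i (π'.part i) = util G i (π.part i)
      · rw [← hne]; exact hi
      · exact absurd (hi ▸ (h i hne).2) (lt_irrefl q)

end Lex

section Contra

variable (G : SimpleGraph V)

lemma util_pos_neighbor {S : Finset V} {x : V} (h : 0 < util G x S) :
    ∃ u ∈ S, G.Adj x u := by
  by_contra hcon
  push_neg at hcon
  have : S.filter (fun j => G.Adj x j) = ∅ := by
    apply Finset.filter_eq_empty_iff.mpr
    intro u hu
    exact hcon u hu
  unfold util at h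
  rw [this] at h
  simp at h

lemma util_le_sub_one {S : Finset V} {x : V} (hx : x ∈ S) :
    util G x S ≤ ((S.card : ℚ) - 1) / (S.card : ℚ) := by
  have h1 : 1 ≤ S.card := Finset.card_pos.mpr ⟨x, hx⟩
  have hS0 : 0 < (S.card : ℚ) := by exact_mod_cast Finset.card_pos.mpr ⟨x, hx⟩
  have hsub : S.filter (fun j => G.Adj x j) ⊆ S.erase x := by
    intro j hj
    rw [Finset.mem_filter] at hj
    exact Finset.mem_erase.mpr ⟨(G.ne_of_adj hj.2).symm, hj.1⟩
  have hcard : (S.filter (fun j => G.Adj x j)).card ≤ S.card - 1 := by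
    calc (S.filter (fun j => G.Adj x j)).card ≤ (S.erase x).card := Finset.card_le_card hsub
    _ = S.card - 1 := Finset.card_erase_of_mem hx
  have hq : ((S.filter (fun j => G.Adj x j)).card : ℚ) ≤ (S.card : ℚ) - 1 := by
    have := (Nat.cast_le (α := ℚ)).mpr hcard
    rwa [Nat.cast_sub h1, Nat.cast_one] at this
  unfold util
  rw [div_le_div_iff₀ hS0 hS0]
  nlinarith

lemma contra1 (tri : ∀ a b c : V, G.Adj a b → G.Adj b c → G.Adj c a → False)
    {S : Finset V} {x y : V} (hx : x ∈ S) (hy : y ∈ S) (hadj : G.Adj x y)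
    (a b : ℚ) (hax : 1/2 ≤ a) (hby : 1/2 ≤ b)
    (ha : a < util G x S) (hb : b < util G y S) : False := by
  have hS0 : 0 < (S.card : ℚ) := by exact_mod_cast Finset.card_pos.mpr ⟨x, hx⟩
  set Nx := S.filter (fun j => G.Adj x j) with hNx
  set Ny := S.filter (fun j => G.Adj y j) with hNy
  have hdisj : Disjoint Nx Ny := by
    rw [Finset.disjoint_left]
    intro v hvx hvy
    rw [hNx, Finset.mem_filter] at hvx
    rw [hNy, Finset.mem_filter] at hvy
    exact tri x y v hadj hvy.2 (hvx.2).symm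
  have hsub : Nx ∪ Ny ⊆ S := by
    intro v hv
    rcases Finset.mem_union.mp hv with h | h
    · exact (Finset.mem_filter.mp h).1
    · exact (Finset.mem_filter.mp h).1
  have hcard : Nx.card + Ny.card ≤ S.card := by
    rw [← Finset.card_union_of_disjoint hdisj]
    exact Finset.card_le_card hsub
  have h1 : a * S.card < Nx.card := by
    unfold util at ha
    rw [← hNx] at ha
    exact (lt_div_iff₀ hS0).mp ha
  have h2 : b * S.card < Ny.card := by
    unfold util at hb
    rw [← hNy] at hb
    exact (lt_div_iff₀ hS0).mp hb
  have hc : ((Nx.card : ℚ) + Ny.card) ≤ S.card := by exact_mod_cast hcard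
  nlinarith

lemma contra2 (tri : ∀ a b c : V, G.Adj a b → G.Adj b c → G.Adj c a → False)
    (c4 : ∀ a b c d : V, G.Adj a b → G.Adj b c → G.Adj c d → G.Adj d a → a ≠ c → b ≠ d → False)
    {S : Finset V} {x y w : V} (hx : x ∈ S) (hy : y ∈ S) (hxy : x ≠ y)
    (hwx : G.Adj w x) (hwy : G.Adj w y)
    (a b : ℚ) (hsum : 1 ≤ a + b)
    (ha : a < util G x S) (hb : b < util G y S) : False := by
  have hS0 : 0 < (S.card : ℚ) := by exact_mod_cast Finset.card_pos.mpr ⟨x, hx⟩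
  have hnxy : ¬ G.Adj x y := fun h => tri x y w h hwy.symm hwx
  set Nx := S.filter (fun j => G.Adj x j) with hNx
  set Ny := S.filter (fun j => G.Adj y j) with hNy
  have hinter : Nx ∩ Ny ⊆ {w} := by
    intro v hv
    rw [Finset.mem_inter] at hv
    obtain ⟨hvx, hvy⟩ := hv
    rw [hNx, Finset.mem_filter] at hvx
    rw [hNy, Finset.mem_filter] at hvy
    rw [Finset.mem_singleton]
    by_contra hvw
    exact c4 w x v y hwx hvx.2 (hvy.2).symm hwy.symm (fun h => hvw h.symm) hxy
  have hunion : Nx ∪ Ny ⊆ S \ {x, y} := by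
    intro v hv
    have hvS : v ∈ S := by
      rcases Finset.mem_union.mp hv with h | h
      · exact (Finset.mem_filter.mp h).1
      · exact (Finset.mem_filter.mp h).1
    rw [Finset.mem_sdiff]
    refine ⟨hvS, ?_⟩
    simp only [Finset.mem_insert, Finset.mem_singleton]
    rintro (rfl | rfl)
    · rcases Finset.mem_union.mp hv with h | h
      · exact G.irrefl (Finset.mem_filter.mp h).2
      · exact hnxy ((Finset.mem_filter.mp h).2).symm
    · rcases Finset.mem_union.mp hv with h | h
      · exact hnxy (Finset.mem_filter.mp h).2
      · exact G.irrefl (Finset.mem_filter.mp h).2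
  have hsubS : ({x, y} : Finset V) ⊆ S := by
    intro v hv
    rcases Finset.mem_insert.mp hv with rfl | hv
    · exact hx
    · exact (Finset.mem_singleton.mp hv) ▸ hy
  have h2S : 2 ≤ S.card := by
    rw [← Finset.card_pair hxy]
    exact Finset.card_le_card hsubS
  have hcard : Nx.card + Ny.card + 1 ≤ S.card := by
    have e1 : (Nx ∪ Ny).card + (Nx ∩ Ny).card = Nx.card + Ny.card :=
      Finset.card_union_add_card_inter Nx Ny
    have e2 : (Nx ∪ Ny).card ≤ S.card - 2 := by
      calc (Nx ∪ Ny).card ≤ (S \ {x, y}).card := Finset.card_le_card hunion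
      _ = S.card - 2 := by rw [Finset.card_sdiff_of_subset hsubS, Finset.card_pair hxy]
    have e3 : (Nx ∩ Ny).card ≤ 1 := by
      calc (Nx ∩ Ny).card ≤ ({w} : Finset V).card := Finset.card_le_card hinter
      _ = 1 := Finset.card_singleton w
    omega
  have h1 : a * S.card < Nx.card := by
    unfold util at ha
    rw [← hNx] at ha
    exact (lt_div_iff₀ hS0).mp ha
  have h2 : b * S.card < Ny.card := by
    unfold util at hb
    rw [← hNy] at hb
    exact (lt_div_iff₀ hS0).mp hb
  have hc : ((Nx.card : ℚ) + Ny.card + 1) ≤ S.card := by exact_mod_cast hcard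
  nlinarith

end Contra

section Surgery

variable (G : SimpleGraph V)

lemma surgeryIII
    (tri : ∀ a b c : V, G.Adj a b → G.Adj b c → G.Adj c a → False)
    (π : FHGPartition V) (hstar : IsStarPartition G π)
    (hmax : ∀ π' : FHGPartition V, IsStarPartition G π' →
      ¬ List.Lex (· < ·) (objVec G π) (objVec G π'))
    {z w : V} (hz1 : π.part z = {z}) (hzw : G.Adj z w) :
    IsStar G (π.part w) w → False := by
  intro hall
  have hwz : w ≠ z := (G.ne_of_adj hzw).symm
  have hwBz : w ∉ π.part z := by
    rw [hz1]
    simp [hwz]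
  have hzBw : z ∉ π.part w := not_mem_part_symm π hwBz
  set T : Finset V := insert z (π.part w) with hT
  have hzT : z ∈ T := Finset.mem_insert_self z _
  have hwT : w ∈ T := Finset.mem_insert_of_mem (π.mem_part w)
  have hcardT : T.card = (π.part w).card + 1 := Finset.card_insert_of_notMem hzBw
  have hbw1 : 1 ≤ (π.part w).card := Finset.card_pos.mpr ⟨w, π.mem_part w⟩
  have hT2 : (2 : ℚ) ≤ (T.card : ℚ) := by
    have : 2 ≤ T.card := by omega
    exact_mod_cast this
  have hT0 : (0 : ℚ) < (T.card : ℚ) := by linarith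
  have hTstar : IsStar G T w := by
    refine ⟨hwT, ?_⟩
    intro j hj hne
    rcases Finset.mem_insert.mp hj with rfl | hj'
    · exact hzw.symm
    · exact hall.2 j hj' hne
  set π' := extract π T with hπ'
  have huntouched : ∀ i, i ∉ T → π'.part i = π.part i := by
    intro i hiT
    apply extract_part_untouched π hiT
    intro x hxi hxT
    rcases Finset.mem_insert.mp hxT with hxz | hxw
    · -- x = z
      have hpz : π.part i = π.part z := part_eq_of_common π (hxz ▸ hxi) (π.mem_part z)
      have : i ∈ π.part z := hpz ▸ π.mem_part i
      rw [hz1, Finset.mem_singleton] at this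
      exact hiT (this ▸ hzT)
    · have hpw : π.part i = π.part w := part_eq_of_common π hxi hxw
      have : i ∈ π.part w := hpw ▸ π.mem_part i
      exact hiT (Finset.mem_insert_of_mem this)
  have hstar' : IsStarPartition G π' := by
    intro i hcard
    by_cases hiT : i ∈ T
    · rw [hπ', extract_part_mem π hiT]
      exact ⟨w, hTstar.1, hTstar.2⟩
    · rw [hπ', huntouched i hiT] at hcard ⊢
      exact hstar i hcard
  have hnew : ∀ i ∈ T, 0 < util G i (π'.part i) := by
    intro i hiT
    rw [hπ', extract_part_mem π hiT]
    by_cases hiw : i = w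
    · subst hiw
      rw [util_center G hTstar]
      apply div_pos (by linarith) (by linarith)
    · rw [util_leaf G tri hTstar hiT hiw]
      positivity
  have hkey : ∀ i, util G i (π'.part i) ≠ util G i (π.part i) →
      (0:ℚ) ≤ util G i (π.part i) ∧ (0:ℚ) < util G i (π'.part i) := by
    intro i hne
    by_cases hiT : i ∈ T
    · exact ⟨util_nonneg G i _, hnew i hiT⟩
    · exact absurd (by rw [huntouched i hiT]) hne
  have hzold : util G z (π.part z) = 0 := by
    rw [hz1]; exact util_singleton G
  have hznew : util G z (π'.part z) ≠ 0 := ne_of_gt (hnew z hzT)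
  exact hmax π' hstar' (improve G π π' 0 hkey z hzold hznew)

lemma surgeryI
    (tri : ∀ a b c : V, G.Adj a b → G.Adj b c → G.Adj c a → False)
    (π : FHGPartition V) (hstar : IsStarPartition G π)
    (hmax : ∀ π' : FHGPartition V, IsStarPartition G π' →
      ¬ List.Lex (· < ·) (objVec G π) (objVec G π'))
    {q : ℚ} {z u c_u : V}
    (hq : util G z (π.part z) = q) (hq0 : 0 ≤ q) (hqh : q < 1/2)
    (hzu : G.Adj z u) (huBz : u ∉ π.part z)
    (hu_ge : q ≤ util G u (π.part u))
    (hBu : IsStar G (π.part u) c_u) (hucu : u ≠ c_u) (hBu3 : 3 ≤ (π.part u).card)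
    (hBz : π.part z = {z} ∨ (3 ≤ (π.part z).card ∧ ∃ c_z, IsStar G (π.part z) c_z ∧ z ≠ c_z)) :
    False := by
  have hznu : z ≠ u := G.ne_of_adj hzu
  have hzBu : z ∉ π.part u := not_mem_part_symm π huBz
  set T : Finset V := {z, u} with hT
  have hzT : z ∈ T := Finset.mem_insert_self z _
  have huT : u ∈ T := by simp [hT]
  have hcardT : T.card = 2 := Finset.card_pair hznu
  have hcardTq : (T.card : ℚ) = 2 := by rw [hcardT]; norm_num
  have hTstar : IsStar G T z := by
    refine ⟨hzT, ?_⟩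
    intro j hj hne
    rcases Finset.mem_insert.mp hj with rfl | hj'
    · exact absurd rfl hne
    · rw [Finset.mem_singleton] at hj'
      exact hj' ▸ hzu
  set π' := extract π T with hπ'
  have hutz' : util G z T = 1/2 := by
    rw [util_center G hTstar, hcardTq]; norm_num
  have hutu' : util G u T = 1/2 := by
    rw [util_leaf G tri hTstar huT (Ne.symm hznu), hcardTq]
  -- sdiff computations
  have hBzT : π.part z \ T = (π.part z).erase z := by
    ext j
    simp only [Finset.mem_sdiff, Finset.mem_erase, hT, Finset.mem_insert, Finset.mem_singleton]
    constructor
    · rintro ⟨hj, hne⟩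
      push_neg at hne
      exact ⟨hne.1, hj⟩
    · rintro ⟨hne, hj⟩
      exact ⟨hj, by push_neg; exact ⟨hne, fun hju => huBz (hju ▸ hj)⟩⟩
  have hBuT : π.part u \ T = (π.part u).erase u := by
    ext j
    simp only [Finset.mem_sdiff, Finset.mem_erase, hT, Finset.mem_insert, Finset.mem_singleton]
    constructor
    · rintro ⟨hj, hne⟩
      push_neg at hne
      exact ⟨hne.2, hj⟩
    · rintro ⟨hne, hj⟩
      exact ⟨hj, by push_neg; exact ⟨fun hjz => hzBu (hjz ▸ hj), hne⟩⟩
  -- B_u facts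
  have hm3 : (3:ℚ) ≤ ((π.part u).card : ℚ) := by exact_mod_cast hBu3
  have hmuq : util G u (π.part u) = 1 / ((π.part u).card : ℚ) :=
    util_leaf G tri hBu (π.mem_part u) hucu
  have hqle : q ≤ 1 / ((π.part u).card : ℚ) := hmuq ▸ hu_ge
  have hBuE : IsStar G ((π.part u).erase u) c_u := by
    refine ⟨Finset.mem_erase.mpr ⟨Ne.symm hucu, hBu.1⟩, ?_⟩
    intro j hj hne
    exact hBu.2 j (Finset.mem_of_mem_erase hj) hne
  have hBuEcard : (((π.part u).erase u).card : ℚ) = ((π.part u).card : ℚ) - 1 := by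
    rw [Finset.card_erase_of_mem (π.mem_part u), Nat.cast_sub (by omega), Nat.cast_one]
  -- B_z facts (case 2)
  have hBzE : ∀ c_z, IsStar G (π.part z) c_z → z ≠ c_z →
      IsStar G ((π.part z).erase z) c_z := by
    intro c_z hc hne
    refine ⟨Finset.mem_erase.mpr ⟨Ne.symm hne, hc.1⟩, ?_⟩
    intro j hj hne'
    exact hc.2 j (Finset.mem_of_mem_erase hj) hne'
  have hBzEcard : (((π.part z).erase z).card : ℚ) = ((π.part z).card : ℚ) - 1 := by
    rw [Finset.card_erase_of_mem (π.mem_part z),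
      Nat.cast_sub (Finset.card_pos.mpr ⟨z, π.mem_part z⟩), Nat.cast_one]
  -- untouched blocks
  have huntouched : ∀ i, i ∉ T → i ∉ π.part z → i ∉ π.part u → π'.part i = π.part i := by
    intro i hiT hiz hiu
    apply extract_part_untouched π hiT
    intro x hxi hxT
    rcases Finset.mem_insert.mp hxT with hxz | hxu
    · have hz_in : z ∈ π.part i := hxz ▸ hxi
      have heq : π.part z = π.part i := π.part_eq i z hz_in
      exact hiz (by rw [heq]; exact π.mem_part i)
    · rw [Finset.mem_singleton] at hxu
      have hu_in : u ∈ π.part i := hxu ▸ hxi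
      have heq : π.part u = π.part i := π.part_eq i u hu_in
      exact hiu (by rw [heq]; exact π.mem_part i)
  -- star partition property of π'
  have hstar' : IsStarPartition G π' := by
    intro i hcard
    by_cases hiT : i ∈ T
    · rw [hπ', extract_part_mem π hiT]
      exact ⟨z, hTstar.1, hTstar.2⟩
    · by_cases hiz : i ∈ π.part z
      · have hpi : π.part i = π.part z := π.part_eq z i hiz
        rcases hBz with h1 | ⟨hb3, c_z, hczstar, hzcz⟩
        · exfalso
          rw [h1, Finset.mem_singleton] at hiz
          exact hiT (hiz ▸ hzT)
        · rw [hπ', extract_part_not_mem π hiT, hpi, hBzT]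
          have hE := hBzE c_z hczstar hzcz
          exact ⟨c_z, hE.1, hE.2⟩
      · by_cases hiu : i ∈ π.part u
        · have hpi : π.part i = π.part u := π.part_eq u i hiu
          rw [hπ', extract_part_not_mem π hiT, hpi, hBuT]
          exact ⟨c_u, hBuE.1, hBuE.2⟩
        · rw [hπ', huntouched i hiT hiz hiu] at hcard ⊢
          exact hstar i hcard
  -- key inequalities
  have hmq0 : (0:ℚ) < ((π.part u).card : ℚ) := by linarith
  have hkey : ∀ i, util G i (π'.part i) ≠ util G i (π.part i) →
      q ≤ util G i (π.part i) ∧ q < util G i (π'.part i) := by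
    intro i hne
    by_cases hiT : i ∈ T
    · rw [hπ', extract_part_mem π hiT]
      rcases Finset.mem_insert.mp hiT with rfl | hi'
      · exact ⟨le_of_eq hq.symm, by rw [hutz']; exact hqh⟩
      · rw [Finset.mem_singleton] at hi'
        subst hi'
        exact ⟨hu_ge, by rw [hutu']; exact hqh⟩
    · by_cases hiz : i ∈ π.part z
      · have hpi : π.part i = π.part z := π.part_eq z i hiz
        rcases hBz with h1 | ⟨hb3, c_z, hczstar, hzcz⟩
        · exfalso
          rw [h1, Finset.mem_singleton] at hiz
          exact hiT (hiz ▸ hzT)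
        · have hinez : i ≠ z := fun h => hiT (h ▸ hzT)
          have hb3q : (3:ℚ) ≤ ((π.part z).card : ℚ) := by exact_mod_cast hb3
          have hq_eq : q = 1 / ((π.part z).card : ℚ) := by
            rw [← hq, util_leaf G tri hczstar (π.mem_part z) hzcz]
          have hnewpart : π'.part i = (π.part z).erase z := by
            rw [hπ', extract_part_not_mem π hiT, hpi, hBzT]
          have hE := hBzE c_z hczstar hzcz
          rw [hnewpart, hpi]
          by_cases hic : i = c_z
          · subst hic
            rw [util_center G hczstar, util_center G hE, hBzEcard, hq_eq]
            constructor
            · rw [div_le_div_iff₀ (by linarith) (by linarith)]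
              nlinarith
            · rw [div_lt_div_iff₀ (by linarith) (by linarith)]
              nlinarith
          · rw [util_leaf G tri hczstar hiz hic,
              util_leaf G tri hE (Finset.mem_erase.mpr ⟨hinez, hiz⟩) hic, hBzEcard, hq_eq]
            constructor
            · exact le_rfl
            · rw [div_lt_div_iff₀ (by linarith) (by linarith)]
              nlinarith
      · by_cases hiu : i ∈ π.part u
        · have hpi : π.part i = π.part u := π.part_eq u i hiu
          have hineu : i ≠ u := fun h => hiT (h ▸ huT)
          have hnewpart : π'.part i = (π.part u).erase u := by
            rw [hπ', extract_part_not_mem π hiT, hpi, hBuT]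
          rw [hnewpart, hpi]
          by_cases hic : i = c_u
          · subst hic
            rw [util_center G hBu, util_center G hBuE, hBuEcard]
            constructor
            · have h12 : (1:ℚ)/2 ≤ (((π.part u).card : ℚ) - 1) / ((π.part u).card : ℚ) := by
                rw [div_le_div_iff₀ (by norm_num) (by linarith)]
                linarith
              linarith
            · have h12 : (1:ℚ)/2 ≤ (((π.part u).card : ℚ) - 1 - 1) / (((π.part u).card : ℚ) - 1) := by
                rw [div_le_div_iff₀ (by norm_num) (by linarith)]
                linarith
              linarith
          · rw [util_leaf G tri hBu hiu hic,
              util_leaf G tri hBuE (Finset.mem_erase.mpr ⟨hineu, hiu⟩) hic, hBuEcard]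
            constructor
            · exact hqle
            · have : (1:ℚ) / ((π.part u).card : ℚ) < 1 / (((π.part u).card : ℚ) - 1) := by
                rw [div_lt_div_iff₀ (by linarith) (by linarith)]
                linarith
              linarith
        · exact absurd (by rw [hπ', huntouched i hiT hiz hiu]) hne
  have hznew : util G z (π'.part z) ≠ q := by
    rw [hπ', extract_part_mem π hzT, hutz']
    exact (ne_of_lt hqh).symm
  exact hmax π' hstar' (improve G π π' q hkey z hq hznew)

lemma surgeryII
    (tri : ∀ a b c : V, G.Adj a b → G.Adj b c → G.Adj c a → False)
    (π : FHGPartition V) (hstar : IsStarPartition G π)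
    (hmax : ∀ π' : FHGPartition V, IsStarPartition G π' →
      ¬ List.Lex (· < ·) (objVec G π) (objVec G π'))
    {z u c_z : V}
    (hq : util G z (π.part z) = 1 / ((π.part z).card : ℚ))
    (hb3 : 3 ≤ (π.part z).card)
    (hczstar : IsStar G (π.part z) c_z) (hzcz : z ≠ c_z)
    (hzu : G.Adj z u) (huBz : u ∉ π.part z)
    (hBu : IsStar G (π.part u) u)
    (hBu2 : 2 ≤ (π.part u).card)
    (hble : (π.part u).card + 2 ≤ (π.part z).card) :
    False := by
  have hznu : z ≠ u := G.ne_of_adj hzu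
  have hzBu : z ∉ π.part u := not_mem_part_symm π huBz
  set T : Finset V := insert z (π.part u) with hT
  have hzT : z ∈ T := Finset.mem_insert_self z _
  have huT : u ∈ T := Finset.mem_insert_of_mem (π.mem_part u)
  have hcardT : T.card = (π.part u).card + 1 := Finset.card_insert_of_notMem hzBu
  have hbq : (3:ℚ) ≤ ((π.part z).card : ℚ) := by exact_mod_cast hb3
  have hmq : (2:ℚ) ≤ ((π.part u).card : ℚ) := by exact_mod_cast hBu2
  have hmbq : ((π.part u).card : ℚ) + 2 ≤ ((π.part z).card : ℚ) := by exact_mod_cast hble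
  have hcardTq : (T.card : ℚ) = ((π.part u).card : ℚ) + 1 := by
    rw [hcardT]; push_cast; ring
  have hTstar : IsStar G T u := by
    refine ⟨huT, ?_⟩
    intro j hj hne
    rcases Finset.mem_insert.mp hj with rfl | hj'
    · exact hzu.symm
    · exact hBu.2 j hj' hne
  set π' := extract π T with hπ'
  have hBzT : π.part z \ T = (π.part z).erase z := by
    ext j
    simp only [Finset.mem_sdiff, Finset.mem_erase, hT, Finset.mem_insert]
    constructor
    · rintro ⟨hj, hne⟩
      push_neg at hne
      exact ⟨hne.1, hj⟩
    · rintro ⟨hne, hj⟩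
      exact ⟨hj, by push_neg; exact ⟨hne, disjoint_parts π huBz hj⟩⟩
  have hBzE : IsStar G ((π.part z).erase z) c_z := by
    refine ⟨Finset.mem_erase.mpr ⟨Ne.symm hzcz, hczstar.1⟩, ?_⟩
    intro j hj hne'
    exact hczstar.2 j (Finset.mem_of_mem_erase hj) hne'
  have hBzEcard : (((π.part z).erase z).card : ℚ) = ((π.part z).card : ℚ) - 1 := by
    rw [Finset.card_erase_of_mem (π.mem_part z),
      Nat.cast_sub (Finset.card_pos.mpr ⟨z, π.mem_part z⟩), Nat.cast_one]
  have huntouched : ∀ i, i ∉ T → i ∉ π.part z → π'.part i = π.part i := by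
    intro i hiT hiz
    apply extract_part_untouched π hiT
    intro x hxi hxT
    rcases Finset.mem_insert.mp hxT with hxz | hxu
    · have hz_in : z ∈ π.part i := hxz ▸ hxi
      have heq : π.part z = π.part i := π.part_eq i z hz_in
      exact hiz (by rw [heq]; exact π.mem_part i)
    · have heq : π.part i = π.part u := part_eq_of_common π hxi hxu
      exact hiT (Finset.mem_insert_of_mem (by rw [← heq]; exact π.mem_part i))
  have hstar' : IsStarPartition G π' := by
    intro i hcard
    by_cases hiT : i ∈ T
    · rw [hπ', extract_part_mem π hiT]
      exact ⟨u, hTstar.1, hTstar.2⟩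
    · by_cases hiz : i ∈ π.part z
      · have hpi : π.part i = π.part z := π.part_eq z i hiz
        rw [hπ', extract_part_not_mem π hiT, hpi, hBzT]
        exact ⟨c_z, hBzE.1, hBzE.2⟩
      · rw [hπ', huntouched i hiT hiz] at hcard ⊢
        exact hstar i hcard
  have hkey : ∀ i, util G i (π'.part i) ≠ util G i (π.part i) →
      1 / ((π.part z).card : ℚ) ≤ util G i (π.part i) ∧
      1 / ((π.part z).card : ℚ) < util G i (π'.part i) := by
    intro i hne
    by_cases hiT : i ∈ T
    · rw [hπ', extract_part_mem π hiT]
      rcases Finset.mem_insert.mp hiT with rfl | hi'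
      · refine ⟨le_of_eq hq.symm, ?_⟩
        rw [util_leaf G tri hTstar hzT hznu, hcardTq]
        rw [div_lt_div_iff₀ (by linarith) (by linarith)]
        linarith
      · by_cases hiu : i = u
        · subst hiu
          rw [util_center G hTstar, util_center G hBu, hcardTq]
          constructor
          · rw [div_le_div_iff₀ (by linarith) (by linarith)]
            nlinarith
          · rw [div_lt_div_iff₀ (by linarith) (by linarith)]
            nlinarith
        · have hpi : π.part i = π.part u := π.part_eq u i hi'
          rw [hpi, util_leaf G tri hTstar hiT hiu, util_leaf G tri hBu hi' hiu, hcardTq]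
          constructor
          · rw [div_le_div_iff₀ (by linarith) (by linarith)]
            linarith
          · rw [div_lt_div_iff₀ (by linarith) (by linarith)]
            linarith
    · by_cases hiz : i ∈ π.part z
      · have hpi : π.part i = π.part z := π.part_eq z i hiz
        have hinez : i ≠ z := fun h => hiT (h ▸ hzT)
        have hnewpart : π'.part i = (π.part z).erase z := by
          rw [hπ', extract_part_not_mem π hiT, hpi, hBzT]
        rw [hnewpart, hpi]
        by_cases hic : i = c_z
        · subst hic
          rw [util_center G hczstar, util_center G hBzE, hBzEcard]
          constructor
          · rw [div_le_div_iff₀ (by linarith) (by linarith)]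
            nlinarith
          · rw [div_lt_div_iff₀ (by linarith) (by linarith)]
            nlinarith
        · rw [util_leaf G tri hczstar hiz hic,
            util_leaf G tri hBzE (Finset.mem_erase.mpr ⟨hinez, hiz⟩) hic, hBzEcard]
          constructor
          · exact le_rfl
          · rw [div_lt_div_iff₀ (by linarith) (by linarith)]
            linarith
      · exact absurd (by rw [hπ', huntouched i hiT hiz]) hne
  have hznew : util G z (π'.part z) ≠ 1 / ((π.part z).card : ℚ) := by
    rw [hπ', extract_part_mem π hzT, util_leaf G tri hTstar hzT hznu, hcardTq]
    have : 1 / ((π.part z).card : ℚ) < 1 / (((π.part u).card : ℚ) + 1) := by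
      rw [div_lt_div_iff₀ (by linarith) (by linarith)]
      linarith
    exact (ne_of_lt this).symm
  exact hmax π' hstar' (improve G π π' (1 / ((π.part z).card : ℚ)) hkey z hq hznew)

end Surgery

section MainHelpers

variable (G : SimpleGraph V)

lemma part_eq_singleton (π : FHGPartition V) {i : V} (h : (π.part i).card = 1) :
    π.part i = {i} := by
  obtain ⟨a, ha⟩ := Finset.card_eq_one.mp h
  have hm := π.mem_part i
  rw [ha, Finset.mem_singleton] at hm
  rw [ha, hm]

lemma util_pos_of_adj {B : Finset V} {i y : V} (hy : y ∈ B) (hadj : G.Adj i y) :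
    0 < util G i B := by
  unfold util
  apply div_pos
  · exact_mod_cast Finset.card_pos.mpr ⟨y, Finset.mem_filter.mpr ⟨hy, hadj⟩⟩
  · exact_mod_cast Finset.card_pos.mpr ⟨y, hy⟩

lemma not_adjall (π : FHGPartition V) (hstar : IsStarPartition G π) {u : V}
    (hnall : ¬ ∀ x ∈ π.part u, x ≠ u → G.Adj u x) :
    ∃ c, IsStar G (π.part u) c ∧ u ≠ c ∧ 3 ≤ (π.part u).card := by
  push_neg at hnall
  obtain ⟨x, hx, hxne, hnadj⟩ := hnall
  have h2 : 1 < (π.part u).card := Finset.one_lt_card.mpr ⟨x, hx, u, π.mem_part u, hxne⟩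
  obtain ⟨c, hcmem, hcadj⟩ := hstar u h2
  have huc : u ≠ c := by
    rintro rfl
    exact hnadj (hcadj x hx hxne)
  have hxc : x ≠ c := by
    rintro rfl
    exact hnadj ((hcadj u (π.mem_part u) huc).symm)
  have hsub : ({x, c, u} : Finset V) ⊆ π.part u := by
    intro y hy
    simp only [Finset.mem_insert, Finset.mem_singleton] at hy
    rcases hy with h | h | h
    · rw [h]; exact hx
    · rw [h]; exact hcmem
    · rw [h]; exact π.mem_part u
  have hcard3 : ({x, c, u} : Finset V).card = 3 := by
    rw [Finset.card_insert_of_notMem (by simp [hxc, hxne]),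
      Finset.card_insert_of_notMem (by simp [Ne.symm huc]), Finset.card_singleton]
  exact ⟨c, ⟨hcmem, hcadj⟩, huc, by rw [← hcard3]; exact Finset.card_le_card hsub⟩

end MainHelpers


/-- In a graph with girth at least five, any star partition whose objective vector
is lexicographically maximal among all star partitions is in the core. -/
theorem stmt_12 (G : SimpleGraph V)
    (hgirth : ∀ (v : V) (c : G.Walk v v), c.IsCycle → c.length ≠ 3 ∧ c.length ≠ 4)
    (π : FHGPartition V) (hstar : IsStarPartition G π)
    (hmax : ∀ π' : FHGPartition V, IsStarPartition G π' →
      ¬ List.Lex (· < ·) (objVec G π) (objVec G π')) :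
    InCore G π := by
  have tri := no_tri G hgirth
  have c4 := no_c4 G hgirth tri
  intro S hS
  obtain ⟨hSne, hblk⟩ := hS
  obtain ⟨z, hzS, hzmin⟩ := Finset.exists_min_image S (fun i => util G i (π.part i)) hSne
  set q := util G z (π.part z) with hqdef
  have hq0 : 0 ≤ q := util_nonneg G z _
  have hzlt : q < util G z S := hblk z hzS
  obtain ⟨w0, hw0S, hzw0⟩ := util_pos_neighbor G (lt_of_le_of_lt hq0 hzlt)
  by_cases hhalf : 1/2 ≤ q
  · exact contra1 G tri hzS hw0S hzw0 q (util G w0 (π.part w0)) hhalf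
      (le_trans hhalf (hzmin w0 hw0S)) hzlt (hblk w0 hw0S)
  push_neg at hhalf
  rcases eq_or_lt_of_le hq0 with hq0' | hqpos
  · -- q = 0 : z is in a singleton block
    have hz1 : π.part z = {z} := by
      rcases Nat.lt_or_ge (π.part z).card 2 with h | h
      · exact part_eq_singleton π
          (by have := Finset.card_pos.mpr ⟨z, π.mem_part z⟩; omega)
      · exfalso
        obtain ⟨c, hcmem, hcadj⟩ := hstar z h
        have hadjz : ∃ y ∈ π.part z, G.Adj z y := by
          by_cases hcz : c = z
          · obtain ⟨y, hy, hyne⟩ := Finset.exists_mem_ne h z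
            subst hcz
            exact ⟨y, hy, hcadj y hy hyne⟩
          · exact ⟨c, hcmem, (hcadj z (π.mem_part z) (fun h' => hcz h'.symm)).symm⟩
        obtain ⟨y, hy, hadj⟩ := hadjz
        have := util_pos_of_adj G hy hadj
        rw [← hqdef, ← hq0'] at this
        exact lt_irrefl 0 this
    by_cases hall : ∀ x ∈ π.part w0, x ≠ w0 → G.Adj w0 x
    · exact surgeryIII G tri π hstar hmax hz1 hzw0 ⟨π.mem_part w0, hall⟩
    · obtain ⟨c_w, hcwstar, hwcw, h3⟩ := not_adjall G π hstar hall
      have hw0Bz : w0 ∉ π.part z := by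
        rw [hz1, Finset.mem_singleton]
        exact fun h => (G.ne_of_adj hzw0) h.symm
      exact surgeryI G tri π hstar hmax (q := q) hqdef.symm hq0 hhalf hzw0 hw0Bz
        (hq0' ▸ util_nonneg G w0 _) hcwstar hwcw h3 (Or.inl hz1)
  · -- q > 0
    have hb2 : 2 ≤ (π.part z).card := by
      by_contra h
      have h1 : (π.part z).card = 1 := by
        have := Finset.card_pos.mpr ⟨z, π.mem_part z⟩; omega
      have := part_eq_singleton π h1
      rw [hqdef, this, util_singleton G] at hqpos
      exact lt_irrefl 0 hqpos
    obtain ⟨c_z, hczmem, hczadj⟩ := hstar z hb2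
    have hczstar : IsStar G (π.part z) c_z := ⟨hczmem, hczadj⟩
    have hb2q : (2:ℚ) ≤ ((π.part z).card : ℚ) := by exact_mod_cast hb2
    have hbpos : (0:ℚ) < ((π.part z).card : ℚ) := by linarith
    have hzcz : z ≠ c_z := by
      rintro rfl
      have hthis := hqdef
      rw [util_center G hczstar] at hthis
      have h12 : (1:ℚ)/2 ≤ (((π.part z).card:ℚ) - 1) / ((π.part z).card:ℚ) := by
        rw [div_le_div_iff₀ (by norm_num) hbpos]
        linarith
      rw [← hthis] at h12
      exact absurd h12 (not_le.mpr hhalf)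
    have hqb : q = 1 / ((π.part z).card : ℚ) := by
      rw [hqdef, util_leaf G tri hczstar (π.mem_part z) hzcz]
    have hb3 : 3 ≤ (π.part z).card := by
      by_contra h
      have hb2' : (π.part z).card = 2 := by omega
      rw [hqb, hb2'] at hhalf
      norm_num at hhalf
    have hbq3 : (3:ℚ) ≤ ((π.part z).card : ℚ) := by exact_mod_cast hb3
    set M := (S.filter fun x => G.Adj z x) \ π.part z with hM
    have hMprop : ∀ u ∈ M, u ∈ S ∧ G.Adj z u ∧ u ∉ π.part z := by
      intro u hu
      rw [hM, Finset.mem_sdiff, Finset.mem_filter] at hu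
      exact ⟨hu.1.1, hu.1.2, hu.2⟩
    have hM2 : ∀ u ∈ M, 2 ≤ (π.part u).card := by
      intro u hu
      by_contra h
      have h1 : (π.part u).card = 1 := by
        have := Finset.card_pos.mpr ⟨u, π.mem_part u⟩; omega
      have hu0 := hzmin u (hMprop u hu).1
      rw [part_eq_singleton π h1, util_singleton G] at hu0
      exact absurd hqpos (not_lt.mpr hu0)
    by_cases hMgood1 : ∃ u ∈ M, ¬ ∀ x ∈ π.part u, x ≠ u → G.Adj u x
    · obtain ⟨u, huM, hnall⟩ := hMgood1
      obtain ⟨huS, hzu, huBz⟩ := hMprop u huM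
      obtain ⟨c_u, hcustar, hucu, h3⟩ := not_adjall G π hstar hnall
      exact surgeryI G tri π hstar hmax (q := q) hqdef.symm hq0 hhalf hzu huBz
        (hzmin u huS) hcustar hucu h3 (Or.inr ⟨hb3, c_z, hczstar, hzcz⟩)
    · push_neg at hMgood1
      by_cases hMgood2 : ∃ u ∈ M, (π.part u).card + 2 ≤ (π.part z).card
      · obtain ⟨u, huM, hle⟩ := hMgood2
        obtain ⟨huS, hzu, huBz⟩ := hMprop u huM
        exact surgeryII G tri π hstar hmax (hqdef ▸ hqb) hb3 hczstar hzcz hzu huBz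
          ⟨π.mem_part u, hMgood1 u huM⟩ (hM2 u huM) hle
      · push_neg at hMgood2
        have hbad : ∀ u ∈ M, 1/2 ≤ util G u (π.part u) := by
          intro u huM
          have hustar : IsStar G (π.part u) u := ⟨π.mem_part u, hMgood1 u huM⟩
          have hmq : (2:ℚ) ≤ ((π.part u).card : ℚ) := by exact_mod_cast hM2 u huM
          rw [util_center G hustar, div_le_div_iff₀ (by norm_num) (by linarith)]
          linarith
        by_cases hM2card : 1 < M.card
        · obtain ⟨u, huM, u', hu'M, hne⟩ := Finset.one_lt_card.mp hM2card
          obtain ⟨huS, hzu, _⟩ := hMprop u huM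
          obtain ⟨hu'S, hzu', _⟩ := hMprop u' hu'M
          exact contra2 G tri c4 huS hu'S hne hzu hzu' _ _
            (by have := hbad u huM; have := hbad u' hu'M; linarith)
            (hblk u huS) (hblk u' hu'S)
        · have hczAdj : G.Adj z c_z := (hczadj z (π.mem_part z) hzcz).symm
          have hNz : ∀ x ∈ S, G.Adj z x → x ∉ M → x = c_z := by
            intro x hxS hadj hxM
            have hxBz : x ∈ π.part z := by
              by_contra hxB
              exact hxM (Finset.mem_sdiff.mpr ⟨Finset.mem_filter.mpr ⟨hxS, hadj⟩, hxB⟩)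
            by_contra hxc
            exact tri z x c_z hadj ((hczadj x hxBz hxc).symm) hczAdj.symm
          have hS0 : (0:ℚ) < (S.card : ℚ) := by
            exact_mod_cast Finset.card_pos.mpr ⟨z, hzS⟩
          have hMcases : M.card = 0 ∨ M.card = 1 := by omega
          by_cases hcS : c_z ∈ S
          · rcases hMcases with hMc | hMc
            · -- M empty, c_z ∈ S
              have hMe : M = ∅ := Finset.card_eq_zero.mp hMc
              have hfz : S.filter (fun j => G.Adj z j) = {c_z} := by
                ext x
                simp only [Finset.mem_filter, Finset.mem_singleton]
                constructor
                · rintro ⟨hxS, hadj⟩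
                  exact hNz x hxS hadj (by rw [hMe]; exact Finset.notMem_empty x)
                · rintro rfl
                  exact ⟨hcS, hczAdj⟩
              have hutS : util G z S = 1 / (S.card : ℚ) := by
                unfold util
                rw [hfz, Finset.card_singleton, Nat.cast_one]
              have hSb : (S.card : ℚ) < ((π.part z).card : ℚ) := by
                rw [hutS, hqb] at hzlt
                rw [div_lt_div_iff₀ hbpos hS0] at hzlt
                linarith
              have h1 : util G c_z (π.part c_z) < util G c_z S := hblk c_z hcS
              have hpc : π.part c_z = π.part z := π.part_eq z c_z hczmem
              rw [hpc, util_center G hczstar] at h1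
              have h2 := util_le_sub_one G hcS (x := c_z)
              have h3 := lt_of_lt_of_le h1 h2
              rw [div_lt_div_iff₀ hbpos hS0] at h3
              nlinarith
            · -- M = {u}, c_z ∈ S
              obtain ⟨u, hMu⟩ := Finset.card_eq_one.mp hMc
              have huM : u ∈ M := by rw [hMu]; exact Finset.mem_singleton_self u
              obtain ⟨huS, hzu, huBz⟩ := hMprop u huM
              have hcu : c_z ≠ u := fun h => huBz (h ▸ hczmem)
              have hpc : π.part c_z = π.part z := π.part_eq z c_z hczmem
              have hsum : (1:ℚ) ≤ util G c_z (π.part c_z) + util G u (π.part u) := by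
                rw [hpc, util_center G hczstar]
                have hc23 : (2:ℚ)/3 ≤ (((π.part z).card:ℚ) - 1) / ((π.part z).card:ℚ) := by
                  rw [div_le_div_iff₀ (by norm_num) hbpos]
                  linarith
                have := hbad u huM
                linarith
              exact contra2 G tri c4 hcS huS hcu hczAdj hzu _ _ hsum
                (hblk c_z hcS) (hblk u huS)
          · rcases hMcases with hMc | hMc
            · -- M empty, c_z ∉ S
              have hMe : M = ∅ := Finset.card_eq_zero.mp hMc
              have hfe : S.filter (fun j => G.Adj z j) = ∅ := by
                apply Finset.filter_eq_empty_iff.mpr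
                intro x hxS hadj
                have hx := hNz x hxS hadj (by rw [hMe]; exact Finset.notMem_empty x)
                exact hcS (hx ▸ hxS)
              have : util G z S = 0 := by
                unfold util
                rw [hfe]
                simp
              rw [this] at hzlt
              linarith
            · -- M = {u}, c_z ∉ S
              obtain ⟨u, hMu⟩ := Finset.card_eq_one.mp hMc
              have huM : u ∈ M := by rw [hMu]; exact Finset.mem_singleton_self u
              obtain ⟨huS, hzu, huBz⟩ := hMprop u huM
              have hfu : S.filter (fun j => G.Adj z j) = {u} := by
                ext x
                simp only [Finset.mem_filter, Finset.mem_singleton]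
                constructor
                · rintro ⟨hxS, hadj⟩
                  by_cases hxM : x ∈ M
                  · rw [hMu, Finset.mem_singleton] at hxM
                    exact hxM
                  · exact absurd ((hNz x hxS hadj hxM) ▸ hxS) hcS
                · rintro rfl
                  exact ⟨huS, hzu⟩
              have hutS : util G z S = 1 / (S.card : ℚ) := by
                unfold util
                rw [hfu, Finset.card_singleton, Nat.cast_one]
              have hSb : (S.card : ℚ) < ((π.part z).card : ℚ) := by
                rw [hutS, hqb] at hzlt
                rw [div_lt_div_iff₀ hbpos hS0] at hzlt
                linarith
              have hustar : IsStar G (π.part u) u := ⟨π.mem_part u, hMgood1 u huM⟩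
              have hmq : (2:ℚ) ≤ ((π.part u).card : ℚ) := by exact_mod_cast hM2 u huM
              have h1 : util G u (π.part u) < util G u S := hblk u huS
              rw [util_center G hustar] at h1
              have h2 := util_le_sub_one G huS (x := u)
              have h3 := lt_of_lt_of_le h1 h2
              rw [div_lt_div_iff₀ (by linarith) hS0] at h3
              have hmS : ((π.part u).card : ℚ) < (S.card : ℚ) := by nlinarith
              have hble : (π.part z).card < (π.part u).card + 2 := hMgood2 u huM
              have h4 : (π.part u).card < S.card := by exact_mod_cast hmS
              have h5 : S.card < (π.part z).card := by exact_mod_cast hSb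
              omega
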